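/- Let m ≥ 2 be an integer. The binary code of length 2^{2m-1} whose codewords are (a + Tr(bx + cy))_{(x,y) ∈ D} for a ∈ F_2, b, c ∈ F_{2^m}, where D = {(x,y) ∈ F_{2^m}² : Tr(x) + Tr(y²) = 0} and Tr = Tr_{2^m/2}, has parameters [2^{2m-1}, 2m, 2^{2m-2}] and weight enumerator 1 + (2^{2m} - 2)·z^{2^{2m-2}} + z^{2^{2m-1}}; it meets the Griesmer bound with equality. -/

import Mathlib

open scoped Classical
open Finset

/-- The defining predicate `Tr(x) + Tr(y²) = 0` on `F_{2^m}²`, `Tr = Tr_{2^m/2}`. -/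
def D14pred {K : Type*} [Field K] [Fintype K] [Algebra (ZMod 2) K] (p : K × K) : Prop :=
  Algebra.trace (ZMod 2) K p.1 + Algebra.trace (ZMod 2) K (p.2 ^ 2) = 0

/-- The codeword `(a + Tr(bx + cy))_{(x,y) ∈ D}` for `u = (a,b,c)`. -/
noncomputable def cw14 {K : Type*} [Field K] [Fintype K] [Algebra (ZMod 2) K]
    (u : ZMod 2 × K × K) : {p : K × K // D14pred p} → ZMod 2 :=
  fun p => u.1 + Algebra.trace (ZMod 2) K (u.2.1 * p.1.1 + u.2.2 * p.1.2)

/-- The Hamming weight of a codeword. -/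
noncomputable def wt14 {K : Type*} [Field K] [Fintype K] [Algebra (ZMod 2) K]
    (f : {p : K × K // D14pred p} → ZMod 2) : ℕ :=
  (univ.filter (fun p => f p ≠ 0)).card

private lemma z2cases : ∀ a : ZMod 2, a = 0 ∨ a = 1 := by decide
private lemma z2add : ∀ a b : ZMod 2, a + b = 0 ↔ a = b := by decide
private lemma z2ne : ∀ a b : ZMod 2, a + b ≠ 0 ↔ b = 1 + a := by decide

private lemma fiber_card_mul {V W : Type*} [AddCommGroup V] [Fintype V] [AddCommGroup W]
    [Fintype W] (f : V →+ W) (hf : Function.Surjective f) (w : W) :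
    Nat.card {v // f v = w} * Nat.card W = Nat.card V := by
  simp only [Nat.card_eq_fintype_card]
  have hcongr : ∀ w₁ w₂ : W, Fintype.card {v // f v = w₁} = Fintype.card {v // f v = w₂} := by
    intro w₁ w₂
    obtain ⟨p, hp⟩ := hf (w₂ - w₁)
    refine Fintype.card_congr
      ⟨fun x => ⟨x.1 + p, ?_⟩, fun y => ⟨y.1 - p, ?_⟩, fun x => ?_, fun y => ?_⟩
    · rw [map_add, x.2, hp]; abel
    · rw [map_sub, y.2, hp]; abel
    · ext; simp
    · ext; simp
  have h1 : Fintype.card V = ∑ w' : W, Fintype.card {v // f v = w'} := by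
    rw [← Fintype.card_sigma]
    exact Fintype.card_congr (Equiv.sigmaFiberEquiv f).symm
  rw [h1, Finset.sum_congr rfl (fun w' _ => hcongr w' w)]
  rw [Finset.sum_const, Finset.card_univ, smul_eq_mul, mul_comm]

private lemma scalar_of_vanish {V : Type*} [AddCommGroup V] [Module (ZMod 2) V]
    (φ g : V →ₗ[ZMod 2] ZMod 2) (v : V) (hv : φ v = 1)
    (h : ∀ x, φ x = 0 → g x = 0) (x : V) : g x = φ x * g v := by
  have h1 : φ (x + φ x • v) = 0 := by
    rw [map_add, map_smul, smul_eq_mul, hv, mul_one]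
    exact (z2add _ _).2 rfl
  have h2 := h _ h1
  rw [map_add, map_smul, smul_eq_mul] at h2
  exact (z2add _ _).1 h2

private lemma surj_pair {V : Type*} [AddCommGroup V] (F : V →+ ZMod 2 × ZMod 2)
    (h10 : ∃ v, F v = (1, 0)) (h01 : ∃ v, F v = (0, 1)) : Function.Surjective F := by
  obtain ⟨v1, hv1⟩ := h10
  obtain ⟨v2, hv2⟩ := h01
  intro w
  have hw : w = (0, 0) ∨ w = (1, 0) ∨ w = (0, 1) ∨ w = (1, 1) := by revert w; decide
  rcases hw with h | h | h | h
  · exact ⟨0, by rw [map_zero, h]; rfl⟩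
  · exact ⟨v1, by rw [hv1, h]⟩
  · exact ⟨v2, by rw [hv2, h]⟩
  · exact ⟨v1 + v2, by rw [map_add, hv1, hv2, h]; decide⟩

private lemma surj_single {V : Type*} [AddCommGroup V] (F : V →+ ZMod 2)
    (h1 : ∃ v, F v = 1) : Function.Surjective F := by
  obtain ⟨v, hv⟩ := h1
  intro w
  rcases z2cases w with h | h
  · exact ⟨0, by simp [h]⟩
  · exact ⟨v, by rw [hv, h]⟩

section KAux

variable {K : Type*} [Field K] [Fintype K] [Algebra (ZMod 2) K]

private lemma tr_sq (y : K) :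
    Algebra.trace (ZMod 2) K (y ^ 2) = Algebra.trace (ZMod 2) K y := by
  haveI : CharP K 2 := charP_of_injective_algebraMap (algebraMap (ZMod 2) K).injective 2
  haveI : ExpChar K 2 := ExpChar.prime Nat.prime_two
  let σ : K ≃ₐ[ZMod 2] K :=
    { frobeniusEquiv K 2 with
      commutes' := fun c => by
        show frobenius K 2 (algebraMap (ZMod 2) K c) = algebraMap (ZMod 2) K c
        rw [frobenius_def, ← map_pow]
        congr 1
        revert c; decide }
  have h := Algebra.trace_eq_of_algEquiv σ y
  have hσ : σ y = y ^ 2 := rfl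
  rw [hσ] at h
  exact h

private lemma tr_exists_one : ∃ x : K, Algebra.trace (ZMod 2) K x = 1 := by
  have h := Algebra.trace_ne_zero (ZMod 2) K
  by_contra hc
  push_neg at hc
  refine h (LinearMap.ext fun x => ?_)
  rcases z2cases (Algebra.trace (ZMod 2) K x) with h0 | h1
  · exact h0
  · exact absurd h1 (hc x)

private lemma tr_faithful {b : K} (h : ∀ x, Algebra.trace (ZMod 2) K (b * x) = 0) :
    b = 0 := by
  refine (traceForm_nondegenerate (ZMod 2) K).1 b (fun x => ?_)
  simpa [Algebra.traceForm_apply] using h x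

noncomputable def psi14 : (K × K) →ₗ[ZMod 2] ZMod 2 :=
  (Algebra.trace (ZMod 2) K).comp (LinearMap.fst (ZMod 2) K K)
    + (Algebra.trace (ZMod 2) K).comp (LinearMap.snd (ZMod 2) K K)

noncomputable def lmap14 (b c : K) : (K × K) →ₗ[ZMod 2] ZMod 2 :=
  ((Algebra.trace (ZMod 2) K).comp (LinearMap.mulLeft (ZMod 2) b)).comp
      (LinearMap.fst (ZMod 2) K K)
    + ((Algebra.trace (ZMod 2) K).comp (LinearMap.mulLeft (ZMod 2) c)).comp
      (LinearMap.snd (ZMod 2) K K)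

@[simp] lemma psi14_apply (p : K × K) :
    psi14 p = Algebra.trace (ZMod 2) K p.1 + Algebra.trace (ZMod 2) K p.2 := rfl

@[simp] lemma lmap14_apply (b c : K) (p : K × K) :
    lmap14 b c p
      = Algebra.trace (ZMod 2) K (b * p.1) + Algebra.trace (ZMod 2) K (c * p.2) := rfl

lemma D14pred_iff (p : K × K) : D14pred p ↔ psi14 p = 0 := by
  rw [D14pred, psi14_apply, tr_sq]

lemma cw14_eq (u : ZMod 2 × K × K) (q : {p : K × K // D14pred p}) :
    cw14 u q = u.1 + lmap14 u.2.1 u.2.2 q.1 := by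
  rw [cw14, lmap14_apply, map_add]

lemma psi14_exists_one : ∃ p : K × K, psi14 (K := K) p = 1 := by
  obtain ⟨x₀, hx₀⟩ := tr_exists_one (K := K)
  exact ⟨(x₀, 0), by simp [hx₀]⟩

lemma cw14_zero_iff (u : ZMod 2 × K × K) :
    cw14 u = 0 ↔ u = 0 ∨ u = (0, 1, 1) := by
  constructor
  · intro h
    obtain ⟨a, b, c⟩ := u
    have hev : ∀ q : {p : K × K // D14pred p}, a + lmap14 b c q.1 = 0 := by
      intro q
      have h2 := congrFun h q
      rw [cw14_eq] at h2
      exact h2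
    have hq0 : D14pred ((0, 0) : K × K) := by simp [D14pred]
    have ha : a = 0 := by simpa using hev ⟨(0, 0), hq0⟩
    obtain ⟨x₀, hx₀⟩ := tr_exists_one (K := K)
    have hb0 : ∀ x : K, Algebra.trace (ZMod 2) K x = 0 →
        Algebra.trace (ZMod 2) K (b * x) = 0 := by
      intro x hx
      have hq : D14pred ((x, 0) : K × K) := by simp [D14pred, hx]
      simpa [ha] using hev ⟨(x, 0), hq⟩
    have hc0 : ∀ y : K, Algebra.trace (ZMod 2) K y = 0 →
        Algebra.trace (ZMod 2) K (c * y) = 0 := by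
      intro y hy
      have hq : D14pred ((0, y) : K × K) := by simp [D14pred, tr_sq, hy]
      simpa [ha] using hev ⟨(0, y), hq⟩
    have hbs := scalar_of_vanish (Algebra.trace (ZMod 2) K)
      ((Algebra.trace (ZMod 2) K).comp (LinearMap.mulLeft (ZMod 2) b)) x₀ hx₀ hb0
    have hcs := scalar_of_vanish (Algebra.trace (ZMod 2) K)
      ((Algebra.trace (ZMod 2) K).comp (LinearMap.mulLeft (ZMod 2) c)) x₀ hx₀ hc0
    simp only [LinearMap.comp_apply, LinearMap.mulLeft_apply] at hbs hcs
    have hqx : D14pred ((x₀, x₀) : K × K) := by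
      rw [D14pred, tr_sq]
      show Algebra.trace (ZMod 2) K x₀ + Algebra.trace (ZMod 2) K x₀ = 0
      rw [hx₀]; decide
    have hcross : Algebra.trace (ZMod 2) K (b * x₀)
        + Algebra.trace (ZMod 2) K (c * x₀) = 0 := by
      simpa [ha] using hev ⟨(x₀, x₀), hqx⟩
    have heq := (z2add _ _).1 hcross
    rcases z2cases (Algebra.trace (ZMod 2) K (b * x₀)) with hT | hT
    · left
      have hb : b = 0 := tr_faithful (fun x => by rw [hbs x, hT, mul_zero])
      have hc : c = 0 := tr_faithful (fun x => by rw [hcs x, ← heq, hT, mul_zero])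
      rw [ha, hb, hc]; rfl
    · right
      have hb : b = 1 := by
        have hz : ∀ x : K, Algebra.trace (ZMod 2) K ((b - 1) * x) = 0 := by
          intro x
          rw [sub_mul, one_mul, map_sub, hbs x, hT, mul_one, sub_self]
        exact sub_eq_zero.1 (tr_faithful hz)
      have hc : c = 1 := by
        have hz : ∀ x : K, Algebra.trace (ZMod 2) K ((c - 1) * x) = 0 := by
          intro x
          rw [sub_mul, one_mul, map_sub, hcs x, ← heq, hT, mul_one, sub_self]
        exact sub_eq_zero.1 (tr_faithful hz)
      rw [ha, hb, hc]
  · rintro (rfl | rfl)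
    · funext q
      show (0 : ZMod 2) + Algebra.trace (ZMod 2) K (0 * q.1.1 + 0 * q.1.2) = 0
      simp
    · funext q
      have hq := q.2
      rw [D14pred] at hq
      show (0 : ZMod 2) + Algebra.trace (ZMod 2) K (1 * q.1.1 + 1 * q.1.2) = 0
      rw [zero_add, one_mul, one_mul, map_add, ← tr_sq q.1.2]
      exact hq

lemma cw14_sub (u v : ZMod 2 × K × K) : cw14 (u - v) = cw14 u - cw14 v := by
  funext q
  simp only [cw14, Prod.fst_sub, Prod.snd_sub, Pi.sub_apply]
  rw [sub_mul, sub_mul, show u.2.1 * q.1.1 - v.2.1 * q.1.1 + (u.2.2 * q.1.2 - v.2.2 * q.1.2)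
      = (u.2.1 * q.1.1 + u.2.2 * q.1.2) - (v.2.1 * q.1.1 + v.2.2 * q.1.2) by ring, map_sub]
  ring

lemma cw14_eq_iff (u u' : ZMod 2 × K × K) :
    cw14 u' = cw14 u ↔ u' = u ∨ u' = u + (0, 1, 1) := by
  rw [← sub_eq_zero (a := cw14 u'), ← cw14_sub, cw14_zero_iff, sub_eq_zero,
    sub_eq_iff_eq_add']

end KAux

private lemma griesmer_sum14 : ∀ n : ℕ, 2 ≤ n →
    (2 : ℤ) ^ (n - 1) = ∑ i ∈ Finset.range n, ⌈((2 : ℚ) ^ (n - 2) / 2 ^ i)⌉ := by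
  intro n hn
  obtain ⟨k, rfl⟩ : ∃ k, n = k + 2 := ⟨n - 2, by omega⟩
  have h1 : k + 2 - 1 = k + 1 := by omega
  have h2 : k + 2 - 2 = k := by omega
  rw [h1, h2, Finset.sum_range_succ]
  have hlast : ⌈((2 : ℚ) ^ k / 2 ^ (k + 1))⌉ = 1 := by
    have hq : ((2 : ℚ) ^ k / 2 ^ (k + 1)) = 1 / 2 := by
      rw [pow_succ, div_eq_div_iff (by positivity) (by norm_num)]
      ring
    rw [hq, Int.ceil_eq_iff]
    constructor <;> norm_num
  have hmain : ∀ i ∈ Finset.range (k + 1),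
      ⌈((2 : ℚ) ^ k / 2 ^ i)⌉ = (2 : ℤ) ^ (k - i) := by
    intro i hi
    rw [Finset.mem_range] at hi
    have hdiv : ((2 : ℚ) ^ k / 2 ^ i) = 2 ^ (k - i) := by
      rw [div_eq_iff (by positivity), ← pow_add]
      congr 1
      omega
    rw [hdiv, show ((2 : ℚ) ^ (k - i)) = ((2 ^ (k - i) : ℤ) : ℚ) by push_cast; ring,
      Int.ceil_intCast]
  rw [Finset.sum_congr rfl hmain, hlast]
  have hre : ∑ i ∈ Finset.range (k + 1), (2 : ℤ) ^ (k - i)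
      = ∑ j ∈ Finset.range (k + 1), (2 : ℤ) ^ j := by
    rw [← Finset.sum_range_reflect]
    refine Finset.sum_congr rfl (fun i hi => ?_)
    rw [Finset.mem_range] at hi
    congr 1
    omega
  rw [hre]
  have hgeom : ∀ nn : ℕ, ∑ j ∈ Finset.range nn, (2 : ℤ) ^ j = 2 ^ nn - 1 := by
    intro nn
    induction nn with
    | zero => simp
    | succ kk ih => rw [Finset.sum_range_succ, ih, pow_succ]; ring
  rw [hgeom]
  ring
theorem stmt14 {K : Type*} [Field K] [Fintype K] [Algebra (ZMod 2) K]
    (m : ℕ) (hm : 2 ≤ m) (hK : Fintype.card K = 2 ^ m) :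
    Fintype.card {p : K × K // D14pred p} = 2 ^ (2 * m - 1) ∧
    (Finset.image (cw14 (K := K)) univ).card = 2 ^ (2 * m) ∧
    (∀ f ∈ Finset.image (cw14 (K := K)) univ, f ≠ 0 →
      wt14 f = 2 ^ (2 * m - 2) ∨ wt14 f = 2 ^ (2 * m - 1)) ∧
    ((Finset.image (cw14 (K := K)) univ).filter
        (fun f => wt14 f = 2 ^ (2 * m - 2))).card = 2 ^ (2 * m) - 2 ∧
    ((Finset.image (cw14 (K := K)) univ).filter
        (fun f => wt14 f = 2 ^ (2 * m - 1))).card = 1 ∧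
    ((2 : ℤ) ^ (2 * m - 1)
      = ∑ i ∈ Finset.range (2 * m), ⌈((2 : ℚ) ^ (2 * m - 2) / 2 ^ i)⌉) := by
  have hKK : Fintype.card (K × K) = 2 ^ (2 * m) := by
    rw [Fintype.card_prod, hK, ← pow_add, two_mul]
  have hZ2 : Fintype.card (ZMod 2) = 2 := rfl
  have hZ22 : Fintype.card (ZMod 2 × ZMod 2) = 4 := rfl
  -- Part 1 : cardinality of D
  have hψsurj : Function.Surjective (psi14 (K := K)).toAddMonoidHom := by
    apply surj_single
    obtain ⟨p, hp⟩ := psi14_exists_one (K := K)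
    exact ⟨p, hp⟩
  have hD_card : Fintype.card {p : K × K // D14pred p} = 2 ^ (2 * m - 1) := by
    have h0 := fiber_card_mul (psi14 (K := K)).toAddMonoidHom hψsurj 0
    rw [Nat.card_eq_fintype_card (α := K × K), hKK, Nat.card_zmod] at h0
    have hcongr : Fintype.card {p : K × K // D14pred p}
        = Nat.card {v : K × K // (psi14 (K := K)).toAddMonoidHom v = 0} := by
      rw [← Nat.card_eq_fintype_card]
      exact Nat.card_congr (Equiv.subtypeEquivRight (fun p => D14pred_iff p))
    rw [hcongr]
    have h2 : (2 : ℕ) ^ (2 * m) = 2 ^ (2 * m - 1) * 2 := by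
      rw [← pow_succ]
      congr 1
      omega
    rw [h2] at h0
    exact Nat.eq_of_mul_eq_mul_right two_pos h0
  -- Part 2 : number of codewords
  set T := Finset.image (cw14 (K := K)) univ with hTdef
  have ht_ne : ((0, 1, 1) : ZMod 2 × K × K) ≠ 0 := by
    simp [Prod.ext_iff]
  have hfiber : ∀ u : ZMod 2 × K × K,
      (univ.filter (fun u' => cw14 u' = cw14 u)).card = 2 := by
    intro u
    have hset : univ.filter (fun u' => cw14 u' = cw14 u) = {u, u + (0, 1, 1)} := by
      ext u'
      simp only [mem_filter, mem_univ, true_and, mem_insert, mem_singleton]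
      exact cw14_eq_iff u u'
    rw [hset, card_insert_of_notMem, card_singleton]
    intro h
    exact ht_ne (left_eq_add.mp (mem_singleton.1 h))
  have hTcard : T.card = 2 ^ (2 * m) := by
    have hsum := Finset.card_eq_sum_card_fiberwise
      (f := cw14 (K := K)) (s := univ) (t := T)
      (fun u _ => mem_image_of_mem _ (mem_univ u))
    have h2 : ∀ f ∈ T, (univ.filter (fun u' => cw14 u' = f)).card = 2 := by
      intro f hf
      obtain ⟨u, -, rfl⟩ := mem_image.1 hf
      exact hfiber u
    rw [Finset.sum_congr rfl h2, Finset.sum_const, smul_eq_mul, Finset.card_univ] at hsum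
    have huniv : Fintype.card (ZMod 2 × K × K) = 2 ^ (2 * m + 1) := by
      rw [Fintype.card_prod, hZ2, hKK, ← pow_succ']
    have h3 : (2 : ℕ) ^ (2 * m + 1) = 2 ^ (2 * m) * 2 := pow_succ 2 (2 * m)
    omega
  -- weight as a fiber cardinality
  have hwt : ∀ (a : ZMod 2) (b c : K),
      wt14 (cw14 (a, b, c))
        = Nat.card {p : K × K // psi14 p = 0 ∧ lmap14 b c p = 1 + a} := by
    intro a b c
    rw [wt14, ← Fintype.card_subtype, ← Nat.card_eq_fintype_card]
    refine Nat.card_congr ⟨fun q => ⟨q.1.1, ?_, ?_⟩, fun p => ⟨⟨p.1, ?_⟩, ?_⟩, ?_, ?_⟩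
    · exact (D14pred_iff _).1 q.1.2
    · have h := q.2
      rw [cw14_eq] at h
      exact (z2ne _ _).1 h
    · exact (D14pred_iff _).2 p.2.1
    · show cw14 (a, b, c) ⟨p.1, _⟩ ≠ 0
      rw [cw14_eq]
      exact (z2ne _ _).2 p.2.2
    · intro q
      apply Subtype.ext
      apply Subtype.ext
      rfl
    · intro p
      apply Subtype.ext
      rfl
  -- generic weights
  have hwt_generic : ∀ (a : ZMod 2) (b c : K), ¬(b = 0 ∧ c = 0) → ¬(b = 1 ∧ c = 1) →
      wt14 (cw14 (a, b, c)) = 2 ^ (2 * m - 2) := by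
    intro a b c hbc0 hbc1
    have hexq : ∃ q : K × K, psi14 q = 0 ∧ lmap14 b c q = 1 := by
      by_contra hcon
      push_neg at hcon
      have hvan : ∀ q : K × K, psi14 q = 0 → lmap14 b c q = 0 := by
        intro q hq
        rcases z2cases (lmap14 b c q) with h | h
        · exact h
        · exact absurd h (hcon q hq)
      obtain ⟨v, hv⟩ := psi14_exists_one (K := K)
      have hs := scalar_of_vanish psi14 (lmap14 b c) v hv hvan
      rcases z2cases (lmap14 b c v) with h | h
      · refine hbc0 ⟨?_, ?_⟩
        · refine tr_faithful (fun x => ?_)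
          have h1 := hs (x, 0)
          rw [h, mul_zero] at h1
          simpa using h1
        · refine tr_faithful (fun y => ?_)
          have h1 := hs (0, y)
          rw [h, mul_zero] at h1
          simpa using h1
      · refine hbc1 ⟨?_, ?_⟩
        · have hb : ∀ x : K, Algebra.trace (ZMod 2) K ((b - 1) * x) = 0 := by
            intro x
            have h1 := hs (x, 0)
            rw [h, mul_one] at h1
            simp only [lmap14_apply, psi14_apply, mul_zero, map_zero, add_zero] at h1
            rw [sub_mul, one_mul, map_sub, h1, sub_self]
          exact sub_eq_zero.1 (tr_faithful hb)
        · have hc : ∀ y : K, Algebra.trace (ZMod 2) K ((c - 1) * y) = 0 := by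
            intro y
            have h1 := hs (0, y)
            rw [h, mul_one] at h1
            simp only [lmap14_apply, psi14_apply, mul_zero, map_zero, zero_add] at h1
            rw [sub_mul, one_mul, map_sub, h1, sub_self]
          exact sub_eq_zero.1 (tr_faithful hc)
    have hFsurj : Function.Surjective ((psi14 (K := K)).prod (lmap14 b c)).toAddMonoidHom := by
      obtain ⟨q, hq0, hq1⟩ := hexq
      obtain ⟨v, hv⟩ := psi14_exists_one (K := K)
      apply surj_pair
      · rcases z2cases (lmap14 b c v) with h | h
        · exact ⟨v, by show (psi14 v, lmap14 b c v) = ((1 : ZMod 2), (0 : ZMod 2)); rw [hv, h]⟩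
        · refine ⟨v + q, ?_⟩
          show (psi14 (v + q), lmap14 b c (v + q)) = ((1 : ZMod 2), (0 : ZMod 2))
          rw [map_add, map_add, hv, hq0, hq1, h]
          decide
      · exact ⟨q, by show (psi14 q, lmap14 b c q) = ((0 : ZMod 2), (1 : ZMod 2)); rw [hq0, hq1]⟩
    have hc4 := fiber_card_mul ((psi14 (K := K)).prod (lmap14 b c)).toAddMonoidHom hFsurj (0, 1 + a)
    rw [Nat.card_eq_fintype_card (α := K × K), hKK,
      Nat.card_eq_fintype_card (α := ZMod 2 × ZMod 2), hZ22] at hc4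
    rw [hwt a b c]
    have he : Nat.card {p : K × K // psi14 p = 0 ∧ lmap14 b c p = 1 + a}
        = Nat.card {p : K × K //
          ((psi14 (K := K)).prod (lmap14 b c)).toAddMonoidHom p = ((0 : ZMod 2), 1 + a)} := by
      refine Nat.card_congr (Equiv.subtypeEquivRight (fun p => ?_))
      have hFp : ((psi14 (K := K)).prod (lmap14 b c)).toAddMonoidHom p
          = (psi14 p, lmap14 b c p) := rfl
      rw [hFp, Prod.mk.injEq]
    rw [he]
    have h2 : (2 : ℕ) ^ (2 * m) = 2 ^ (2 * m - 2) * 4 := by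
      have h3 : 2 * m = (2 * m - 2) + 2 := by omega
      rw [h3, pow_add]
      norm_num
    rw [h2] at hc4
    exact Nat.eq_of_mul_eq_mul_right (show (0:ℕ) < 4 by norm_num) hc4
  -- weight of the all-one codeword
  have hwt_j : wt14 (cw14 ((1 : ZMod 2), (0 : K), (0 : K))) = 2 ^ (2 * m - 1) := by
    rw [wt14]
    have hall : (univ.filter
        (fun q : {p : K × K // D14pred p} => cw14 ((1 : ZMod 2), (0 : K), (0 : K)) q ≠ 0))
        = univ := by
      refine Finset.filter_true_of_mem (fun q _ => ?_)
      show (1 : ZMod 2) + Algebra.trace (ZMod 2) K (0 * q.1.1 + 0 * q.1.2) ≠ 0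
      simp
    rw [hall, card_univ, hD_card]
  -- classification of codewords
  have hclass : ∀ u : ZMod 2 × K × K, cw14 u = 0
      ∨ cw14 u = cw14 ((1 : ZMod 2), (0 : K), (0 : K))
      ∨ wt14 (cw14 u) = 2 ^ (2 * m - 2) := by
    intro u
    obtain ⟨a, b, c⟩ := u
    by_cases h00 : b = 0 ∧ c = 0
    · obtain ⟨rfl, rfl⟩ := h00
      rcases z2cases a with rfl | rfl
      · left; exact (cw14_zero_iff _).2 (Or.inl rfl)
      · right; left; rfl
    · by_cases h11 : b = 1 ∧ c = 1
      · obtain ⟨rfl, rfl⟩ := h11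
        rcases z2cases a with rfl | rfl
        · left; exact (cw14_zero_iff _).2 (Or.inr rfl)
        · right; left
          exact (cw14_eq_iff ((1 : ZMod 2), (0 : K), (0 : K)) _).2
            (Or.inr (by simp [Prod.ext_iff]))
      · right; right; exact hwt_generic a b c h00 h11
  -- part 3
  have part3 : ∀ f ∈ T, f ≠ 0 →
      wt14 f = 2 ^ (2 * m - 2) ∨ wt14 f = 2 ^ (2 * m - 1) := by
    intro f hf hf0
    obtain ⟨u, -, rfl⟩ := mem_image.1 hf
    rcases hclass u with h | h | h
    · exact absurd h hf0
    · right; rw [h]; exact hwt_j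
    · left; exact h
  have hwt0 : ∀ f : {p : K × K // D14pred p} → ZMod 2, wt14 f = 0 ↔ f = 0 := by
    intro f
    rw [wt14, Finset.card_eq_zero, Finset.filter_eq_empty_iff]
    constructor
    · intro h
      funext q
      have := h (mem_univ q)
      simpa using this
    · intro h q _
      rw [h]
      simp
  have hne1 : (2 : ℕ) ^ (2 * m - 2) ≠ 2 ^ (2 * m - 1) := by
    intro h
    have := Nat.pow_right_injective (le_refl 2) h
    omega
  have hpos : 0 < (2 : ℕ) ^ (2 * m - 2) := pow_pos two_pos _
  have hpos1 : 0 < (2 : ℕ) ^ (2 * m - 1) := pow_pos two_pos _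
  have hj0 : cw14 ((1 : ZMod 2), (0 : K), (0 : K)) ≠ 0 := by
    intro h
    rcases (cw14_zero_iff _).1 h with h' | h' <;> simp [Prod.ext_iff] at h'
  -- part 5
  have hfilt1 : T.filter (fun f => wt14 f = 2 ^ (2 * m - 1))
      = {cw14 ((1 : ZMod 2), (0 : K), (0 : K))} := by
    ext f
    simp only [mem_filter, mem_singleton]
    constructor
    · rintro ⟨hf, hw⟩
      obtain ⟨u, -, rfl⟩ := mem_image.1 hf
      rcases hclass u with h | h | h
      · rw [h, (hwt0 0).2 rfl] at hw
        exact absurd hw.symm hpos1.ne'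
      · exact h
      · rw [h] at hw
        exact absurd hw hne1
    · rintro rfl
      exact ⟨mem_image_of_mem _ (mem_univ _), hwt_j⟩
  have part5 : (T.filter (fun f => wt14 f = 2 ^ (2 * m - 1))).card = 1 := by
    rw [hfilt1, card_singleton]
  -- part 4
  have hfilt2 : T.filter (fun f => wt14 f = 2 ^ (2 * m - 2))
      = T \ {0, cw14 ((1 : ZMod 2), (0 : K), (0 : K))} := by
    ext f
    simp only [mem_filter, mem_sdiff, mem_insert, mem_singleton]
    constructor
    · rintro ⟨hf, hw⟩
      refine ⟨hf, ?_⟩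
      push_neg
      constructor
      · rintro rfl
        rw [(hwt0 0).2 rfl] at hw
        exact hpos.ne' hw.symm
      · rintro rfl
        rw [hwt_j] at hw
        exact hne1 hw.symm
    · rintro ⟨hf, hno⟩
      push_neg at hno
      obtain ⟨hf0, hfj⟩ := hno
      refine ⟨hf, ?_⟩
      rcases part3 f hf hf0 with h | h
      · exact h
      · exfalso
        apply hfj
        have hmem : f ∈ T.filter (fun f => wt14 f = 2 ^ (2 * m - 1)) :=
          mem_filter.2 ⟨hf, h⟩
        rw [hfilt1] at hmem
        exact mem_singleton.1 hmem
  have hsub : ({0, cw14 ((1 : ZMod 2), (0 : K), (0 : K))} :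
      Finset ({p : K × K // D14pred p} → ZMod 2)) ⊆ T := by
    intro f hf
    rcases mem_insert.1 hf with rfl | hf
    · exact mem_image.2 ⟨0, mem_univ _, (cw14_zero_iff 0).2 (Or.inl rfl)⟩
    · rw [mem_singleton.1 hf]
      exact mem_image_of_mem _ (mem_univ _)
  have hpair : ({0, cw14 ((1 : ZMod 2), (0 : K), (0 : K))} :
      Finset ({p : K × K // D14pred p} → ZMod 2)).card = 2 := by
    rw [card_insert_of_notMem (fun h => hj0 (mem_singleton.1 h).symm), card_singleton]
  have part4 : (T.filter (fun f => wt14 f = 2 ^ (2 * m - 2))).card = 2 ^ (2 * m) - 2 := by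
    rw [hfilt2, card_sdiff_of_subset hsub, hpair, hTcard]
  -- part 6 : Griesmer
  have part6 : (2 : ℤ) ^ (2 * m - 1)
      = ∑ i ∈ Finset.range (2 * m), ⌈((2 : ℚ) ^ (2 * m - 2) / 2 ^ i)⌉ :=
    griesmer_sum14 (2 * m) (by omega)
  exact ⟨hD_card, hTcard, part3, part4, part5, part6⟩
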